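/- Let μ₁ : ℝ → ℝ be the ground state energy μ₁(ξ) of the operator H[a,m,α;ξ] = -∂_t(w(t)∂_t) + w(t)(t-ξ)² + αV(t) on ℝ, defined variationally by μ₁(ξ) = inf over nonzero u in B¹(ℝ) of q[ξ](u)/‖u‖², where q[ξ](u) = ∫_{ℝ₊}(|u'|² + (t-ξ)²|u|² - α|u|²) dt + ∫_{ℝ₋}((1/m)(|u'|² + (t-ξ)²|u|²) + aα|u|²) dt. Then for all α > 0, inf_ξ μ₁(ξ) + α ≥ min(Θ₀, Θ₀/m + (a+1)α), where Θ₀ is the bottom of the spectrum of the Neumann realization of -d²/dt² + (t-ξ)² on ℝ₊ minimized over ξ. -/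

import Mathlib

open MeasureTheory Set

set_option maxHeartbeats 1000000

/-- The quadratic form `q[a,m,α;ξ]` of the model operator `H[a,m,α;ξ]` on the line. -/
noncomputable def qform (a m α ξ : ℝ) (u : ℝ → ℝ) : ℝ :=
  (∫ t in Ioi (0 : ℝ), ((deriv u t) ^ 2 + (t - ξ) ^ 2 * (u t) ^ 2 - α * (u t) ^ 2)) +
  (∫ t in Iio (0 : ℝ), ((1 / m) * ((deriv u t) ^ 2 + (t - ξ) ^ 2 * (u t) ^ 2)
      + a * α * (u t) ^ 2))

/-- Membership in the form domain `B¹(ℝ) = H¹(ℝ) ∩ L²(ℝ, |t| dt)` (together with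
the finiteness of the harmonic-oscillator energy). -/
def memB1 (u : ℝ → ℝ) : Prop :=
  Differentiable ℝ u ∧ Integrable (fun t => (u t) ^ 2) ∧
  Integrable (fun t => (deriv u t) ^ 2) ∧
  Integrable (fun t => |t| * (u t) ^ 2) ∧
  Integrable (fun t => t ^ 2 * (u t) ^ 2)

/-- The ground state energy `μ₁(a,m,α;ξ)`, defined variationally. -/
noncomputable def mu1 (a m α ξ : ℝ) : ℝ :=
  sInf {r : ℝ | ∃ u : ℝ → ℝ, memB1 u ∧ (∫ t, (u t) ^ 2) ≠ 0 ∧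
    r = qform a m α ξ u / ∫ t, (u t) ^ 2}

/-- The de Gennes constant `Θ₀`: the infimum over `ξ` of the bottom of the
spectrum of the Neumann realization of `-d²/dt² + (t-ξ)²` on `ℝ₊`,
defined variationally. -/
noncomputable def Theta0 : ℝ :=
  ⨅ ξ : ℝ, sInf {r : ℝ | ∃ u : ℝ → ℝ, Differentiable ℝ u ∧
    IntegrableOn (fun t => (u t) ^ 2) (Ioi 0) ∧
    IntegrableOn (fun t => (deriv u t) ^ 2 + (t - ξ) ^ 2 * (u t) ^ 2) (Ioi 0) ∧
    (∫ t in Ioi (0 : ℝ), (u t) ^ 2) ≠ 0 ∧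
    r = (∫ t in Ioi (0 : ℝ), ((deriv u t) ^ 2 + (t - ξ) ^ 2 * (u t) ^ 2)) /
        ∫ t in Ioi (0 : ℝ), (u t) ^ 2}

/-- The Rayleigh-quotient set for the half-line Neumann problem. -/
def dgSet (ξ : ℝ) : Set ℝ :=
  {r : ℝ | ∃ u : ℝ → ℝ, Differentiable ℝ u ∧
    IntegrableOn (fun t => (u t) ^ 2) (Ioi 0) ∧
    IntegrableOn (fun t => (deriv u t) ^ 2 + (t - ξ) ^ 2 * (u t) ^ 2) (Ioi 0) ∧
    (∫ t in Ioi (0 : ℝ), (u t) ^ 2) ≠ 0 ∧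
    r = (∫ t in Ioi (0 : ℝ), ((deriv u t) ^ 2 + (t - ξ) ^ 2 * (u t) ^ 2)) /
        ∫ t in Ioi (0 : ℝ), (u t) ^ 2}

lemma Theta0_eq : Theta0 = ⨅ ξ : ℝ, sInf (dgSet ξ) := rfl

lemma dgSet_nonneg (ξ : ℝ) : ∀ r ∈ dgSet ξ, (0 : ℝ) ≤ r := by
  rintro r ⟨u, _, _, _, _, rfl⟩
  apply div_nonneg
  · exact setIntegral_nonneg measurableSet_Ioi fun t _ => by positivity
  · exact setIntegral_nonneg measurableSet_Ioi fun t _ => by positivity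

lemma Theta0_nonneg : 0 ≤ Theta0 := by
  rw [Theta0_eq]
  exact le_ciInf fun ξ => Real.sInf_nonneg (dgSet_nonneg ξ)

lemma Theta0_le_sInf (ξ : ℝ) : Theta0 ≤ sInf (dgSet ξ) := by
  rw [Theta0_eq]
  refine ciInf_le ⟨0, ?_⟩ ξ
  rintro r ⟨ξ', rfl⟩
  exact Real.sInf_nonneg (dgSet_nonneg ξ')

/-- The key half-line lower bound on `Ioi 0`. -/
lemma theta0_mul_le_Ioi (u : ℝ → ℝ) (ξ : ℝ) (hd : Differentiable ℝ u)
    (h2 : IntegrableOn (fun t => (u t) ^ 2) (Ioi 0))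
    (hE : IntegrableOn (fun t => (deriv u t) ^ 2 + (t - ξ) ^ 2 * (u t) ^ 2) (Ioi 0)) :
    Theta0 * ∫ t in Ioi (0 : ℝ), (u t) ^ 2 ≤
      ∫ t in Ioi (0 : ℝ), ((deriv u t) ^ 2 + (t - ξ) ^ 2 * (u t) ^ 2) := by
  set D := ∫ t in Ioi (0 : ℝ), (u t) ^ 2 with hD
  set N := ∫ t in Ioi (0 : ℝ), ((deriv u t) ^ 2 + (t - ξ) ^ 2 * (u t) ^ 2) with hN
  have hD0 : 0 ≤ D := setIntegral_nonneg measurableSet_Ioi fun t _ => by positivity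
  have hN0 : 0 ≤ N := setIntegral_nonneg measurableSet_Ioi fun t _ => by positivity
  rcases eq_or_lt_of_le hD0 with h | h
  · rw [← h, mul_zero]; exact hN0
  · have hmem : N / D ∈ dgSet ξ := ⟨u, hd, h2, hE, ne_of_gt h, rfl⟩
    have h1 : sInf (dgSet ξ) ≤ N / D := csInf_le ⟨0, dgSet_nonneg ξ⟩ hmem
    have h2' : Theta0 ≤ N / D := (Theta0_le_sInf ξ).trans h1
    calc Theta0 * D ≤ (N / D) * D := mul_le_mul_of_nonneg_right h2' hD0
    _ = N := div_mul_cancel₀ N (ne_of_gt h)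

/-- The reflected half-line lower bound on `Iio 0`. -/
lemma theta0_mul_le_Iio (u : ℝ → ℝ) (ξ : ℝ) (hd : Differentiable ℝ u)
    (h2 : IntegrableOn (fun t => (u t) ^ 2) (Iio 0))
    (hE : IntegrableOn (fun t => (deriv u t) ^ 2 + (t - ξ) ^ 2 * (u t) ^ 2) (Iio 0)) :
    Theta0 * ∫ t in Iio (0 : ℝ), (u t) ^ 2 ≤
      ∫ t in Iio (0 : ℝ), ((deriv u t) ^ 2 + (t - ξ) ^ 2 * (u t) ^ 2) := by
  have hvd : Differentiable ℝ (fun t => u (-t)) := hd.comp differentiable_neg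
  have hrefl : ∀ (f : ℝ → ℝ), IntegrableOn f (Iio 0) →
      IntegrableOn (fun t => f (-t)) (Ioi 0) := by
    intro f hf
    have h := (Measure.measurePreserving_neg (volume : Measure ℝ)).integrableOn_comp_preimage
      (e := fun x : ℝ => -x) (Homeomorph.neg ℝ).measurableEmbedding (f := f) (s := Iio 0)
    have hpre : ((fun x : ℝ => -x) ⁻¹' Iio (0 : ℝ)) = Ioi 0 := by
      ext x; simp
    rw [hpre] at h
    exact h.mpr hf
  have hv2 : IntegrableOn (fun t => (u (-t)) ^ 2) (Ioi 0) :=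
    hrefl (fun s => (u s) ^ 2) h2
  have hEeq : (fun t => (deriv (fun s => u (-s)) t) ^ 2 + (t - (-ξ)) ^ 2 * (u (-t)) ^ 2) =
      fun t => (deriv u (-t)) ^ 2 + ((-t) - ξ) ^ 2 * (u (-t)) ^ 2 := by
    funext t
    rw [deriv_comp_neg u t]
    ring
  have hvE : IntegrableOn
      (fun t => (deriv (fun s => u (-s)) t) ^ 2 + (t - (-ξ)) ^ 2 * (u (-t)) ^ 2) (Ioi 0) := by
    rw [hEeq]
    exact hrefl (fun s => (deriv u s) ^ 2 + (s - ξ) ^ 2 * (u s) ^ 2) hE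
  have key := theta0_mul_le_Ioi (fun t => u (-t)) (-ξ) hvd hv2 hvE
  have e1 : (∫ t in Ioi (0 : ℝ), (u (-t)) ^ 2) = ∫ t in Iio (0 : ℝ), (u t) ^ 2 := by
    rw [integral_comp_neg_Ioi (0 : ℝ) (fun s => (u s) ^ 2), neg_zero,
      integral_Iic_eq_integral_Iio]
  have e2 : (∫ t in Ioi (0 : ℝ),
        ((deriv (fun s => u (-s)) t) ^ 2 + (t - (-ξ)) ^ 2 * (u (-t)) ^ 2)) =
      ∫ t in Iio (0 : ℝ), ((deriv u t) ^ 2 + (t - ξ) ^ 2 * (u t) ^ 2) := by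
    rw [show (fun t => (deriv (fun s => u (-s)) t) ^ 2 + (t - (-ξ)) ^ 2 * (u (-t)) ^ 2) =
        (fun t => (fun s => (deriv u s) ^ 2 + (s - ξ) ^ 2 * (u s) ^ 2) (-t)) by
          rw [hEeq]]
    rw [integral_comp_neg_Ioi (0 : ℝ) (fun s => (deriv u s) ^ 2 + (s - ξ) ^ 2 * (u s) ^ 2),
      neg_zero, integral_Iic_eq_integral_Iio]
  rw [← e1, ← e2]
  exact key

/-- For `u ∈ B¹`, the potential term is integrable. -/
lemma integrable_pot (u : ℝ → ℝ) (ξ : ℝ) (h : memB1 u) :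
    Integrable (fun t => (t - ξ) ^ 2 * (u t) ^ 2) := by
  obtain ⟨hd, h2, hd2, habs, hsq⟩ := h
  have hcont : Continuous u := hd.continuous
  have ht : Integrable (fun t => t * (u t) ^ 2) := by
    refine Integrable.mono' habs ?_ ?_
    · exact (continuous_id.mul (hcont.pow 2)).aestronglyMeasurable
    · filter_upwards with t
      rw [Real.norm_eq_abs, abs_mul, abs_pow, sq_abs]
  have heq : (fun t => (t - ξ) ^ 2 * (u t) ^ 2) =
      fun t => t ^ 2 * (u t) ^ 2 - (2 * ξ) * (t * (u t) ^ 2) + ξ ^ 2 * (u t) ^ 2 := by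
    funext t; ring
  rw [heq]
  exact (hsq.sub (ht.const_mul _)).add (h2.const_mul _)

lemma gaussian_memB1 : memB1 (fun t => Real.exp (-t ^ 2)) := by
  set g : ℝ → ℝ := fun t => Real.exp (-t ^ 2) with hg
  have hgd : Differentiable ℝ g := Real.differentiable_exp.comp (differentiable_pow 2).neg
  have hderiv : deriv g = fun t => Real.exp (-t ^ 2) * (-(2 * t)) := by
    funext t
    have h1 : HasDerivAt (fun t : ℝ => -t ^ 2) (-(2 * t)) t := by
      exact ((hasDerivAt_pow 2 t).neg).congr_of_eventuallyEq (Filter.Eventually.of_forall fun _ => by simp) |>.congr_deriv (by ring)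
    exact (h1.exp).deriv
  have hkey : ∀ t : ℝ, t ^ 2 * Real.exp (-t ^ 2) ≤ 1 := by
    intro t
    have h1 : t ^ 2 ≤ Real.exp (t ^ 2) := by nlinarith [Real.add_one_le_exp (t ^ 2)]
    have h2 : (0 : ℝ) < Real.exp (-t ^ 2) := Real.exp_pos _
    calc t ^ 2 * Real.exp (-t ^ 2) ≤ Real.exp (t ^ 2) * Real.exp (-t ^ 2) := by nlinarith
    _ = 1 := by rw [← Real.exp_add]; simp
  have hgsq : ∀ t : ℝ, (g t) ^ 2 = Real.exp (-t ^ 2) * Real.exp (-t ^ 2) := fun t => sq (g t)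
  have hbase : Integrable (fun t : ℝ => Real.exp (-t ^ 2)) := by
    have := integrable_exp_neg_mul_sq (b := (1 : ℝ)) one_pos
    simpa using this
  have hle : ∀ t : ℝ, Real.exp (-t ^ 2) ≤ 1 := fun t =>
    Real.exp_le_one_iff.mpr (neg_nonpos.mpr (sq_nonneg t))
  refine ⟨hgd, ?_, ?_, ?_, ?_⟩
  · refine Integrable.mono' hbase ((hgd.continuous.pow 2).aestronglyMeasurable) ?_
    filter_upwards with t
    rw [Real.norm_eq_abs, abs_of_nonneg (by positivity), hgsq t]
    nlinarith [Real.exp_pos (-t ^ 2), hle t]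
  · rw [hderiv]
    refine Integrable.mono' (hbase.const_mul 4)
      (((Real.continuous_exp.comp (continuous_pow 2).neg).mul
        ((continuous_const.mul continuous_id).neg)).pow 2).aestronglyMeasurable ?_
    filter_upwards with t
    rw [Real.norm_eq_abs, abs_of_nonneg (by positivity)]
    have h1 : (Real.exp (-t ^ 2) * -(2 * t)) ^ 2
        = 4 * ((t ^ 2 * Real.exp (-t ^ 2)) * Real.exp (-t ^ 2)) := by ring
    rw [h1]
    nlinarith [hkey t, Real.exp_pos (-t ^ 2), hle t]
  · refine Integrable.mono' (hbase.const_mul 2)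
      ((continuous_abs.mul ((hgd.continuous.pow 2))).aestronglyMeasurable) ?_
    filter_upwards with t
    rw [Real.norm_eq_abs, abs_of_nonneg (by positivity), hgsq t]
    have habs : |t| ≤ t ^ 2 + 1 := by nlinarith [abs_nonneg t, sq_abs t]
    nlinarith [Real.exp_pos (-t ^ 2), hle t, hkey t, abs_nonneg t,
      mul_le_mul_of_nonneg_right habs (le_of_lt (Real.exp_pos (-t ^ 2)))]
  · refine Integrable.mono' hbase
      (((continuous_pow 2).mul ((hgd.continuous.pow 2))).aestronglyMeasurable) ?_
    filter_upwards with t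
    rw [Real.norm_eq_abs, abs_of_nonneg (by positivity), hgsq t]
    nlinarith [hkey t, Real.exp_pos (-t ^ 2), hle t, sq_nonneg t]

lemma gaussian_int_ne : (∫ t : ℝ, ((fun t => Real.exp (-t ^ 2)) t) ^ 2) ≠ 0 := by
  have heq : (fun t : ℝ => (Real.exp (-t ^ 2)) ^ 2) = fun t : ℝ => Real.exp (-(2:ℝ) * t ^ 2) := by
    funext t
    rw [← Real.exp_nat_mul]
    ring_nf
  simp only
  rw [heq, integral_gaussian]
  positivity

/-- The set defining `mu1` is nonempty. -/
lemma mu1_set_nonempty (a m α ξ : ℝ) :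
    {r : ℝ | ∃ u : ℝ → ℝ, memB1 u ∧ (∫ t, (u t) ^ 2) ≠ 0 ∧
      r = qform a m α ξ u / ∫ t, (u t) ^ 2}.Nonempty :=
  ⟨_, ⟨fun t => Real.exp (-t ^ 2), gaussian_memB1, gaussian_int_ne, rfl⟩⟩

/-- The core lower bound on the Rayleigh quotient. -/
lemma qform_lower (a m α ξ : ℝ) (hm : 0 < m) (hα : 0 < α) (u : ℝ → ℝ)
    (hu : memB1 u) (hne : (∫ t, (u t) ^ 2) ≠ 0) :
    min Theta0 (Theta0 / m + (a + 1) * α) - α ≤ qform a m α ξ u / ∫ t, (u t) ^ 2 := by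
  obtain ⟨hd, h2, hd2, habs, hsq⟩ := hu
  have hpot := integrable_pot u ξ ⟨hd, h2, hd2, habs, hsq⟩
  have hEint : Integrable (fun t => (deriv u t) ^ 2 + (t - ξ) ^ 2 * (u t) ^ 2) := hd2.add hpot
  set Dp := ∫ t in Ioi (0 : ℝ), (u t) ^ 2 with hDp
  set Dm := ∫ t in Iio (0 : ℝ), (u t) ^ 2 with hDm
  set Np := ∫ t in Ioi (0 : ℝ), ((deriv u t) ^ 2 + (t - ξ) ^ 2 * (u t) ^ 2) with hNp
  set Nm := ∫ t in Iio (0 : ℝ), ((deriv u t) ^ 2 + (t - ξ) ^ 2 * (u t) ^ 2) with hNm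
  have hDp0 : 0 ≤ Dp := setIntegral_nonneg measurableSet_Ioi fun t _ => by positivity
  have hDm0 : 0 ≤ Dm := setIntegral_nonneg measurableSet_Iio fun t _ => by positivity
  have hsplit : (∫ t, (u t) ^ 2) = Dm + Dp := by
    rw [hDm, hDp, ← integral_Iic_eq_integral_Iio]
    exact (intervalIntegral.integral_Iic_add_Ioi h2.integrableOn h2.integrableOn).symm
  have hDpos : 0 < Dm + Dp := by
    rcases lt_or_eq_of_le (add_nonneg hDm0 hDp0) with h | h
    · exact h
    · exact absurd (hsplit.trans h.symm) hne
  have hbp := theta0_mul_le_Ioi u ξ hd h2.integrableOn hEint.integrableOn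
  have hbm := theta0_mul_le_Iio u ξ hd h2.integrableOn hEint.integrableOn
  rw [← hNp, ← hDp] at hbp
  rw [← hNm, ← hDm] at hbm
  -- compute qform
  have hq1 : (∫ t in Ioi (0 : ℝ),
      ((deriv u t) ^ 2 + (t - ξ) ^ 2 * (u t) ^ 2 - α * (u t) ^ 2)) = Np - α * Dp := by
    rw [hNp, hDp, ← integral_const_mul]
    exact integral_sub hEint.integrableOn ((h2.const_mul α).integrableOn)
  have hq2 : (∫ t in Iio (0 : ℝ),
      ((1 / m) * ((deriv u t) ^ 2 + (t - ξ) ^ 2 * (u t) ^ 2) + a * α * (u t) ^ 2))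
      = (1 / m) * Nm + a * α * Dm := by
    rw [hNm, hDm, ← integral_const_mul, ← integral_const_mul]
    exact integral_add ((hEint.const_mul (1 / m)).integrableOn)
      ((h2.const_mul (a * α)).integrableOn)
  have hqval : qform a m α ξ u = Np - α * Dp + ((1 / m) * Nm + a * α * Dm) := by
    rw [qform, hq1, hq2]
  set M := min Theta0 (Theta0 / m + (a + 1) * α) with hM
  have hM1 : M ≤ Theta0 := min_le_left _ _
  have hM2 : M ≤ Theta0 / m + (a + 1) * α := min_le_right _ _
  have hkey : M * (Dm + Dp) ≤ qform a m α ξ u + α * (Dm + Dp) := by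
    rw [hqval]
    have c1 : M * Dp ≤ Np := le_trans (mul_le_mul_of_nonneg_right hM1 hDp0) hbp
    have c2 : (Theta0 / m) * Dm ≤ (1 / m) * Nm := by
      have h1m : (0 : ℝ) ≤ 1 / m := by positivity
      calc (Theta0 / m) * Dm = (1 / m) * (Theta0 * Dm) := by ring
      _ ≤ (1 / m) * Nm := mul_le_mul_of_nonneg_left hbm h1m
    have c3 : M * Dm ≤ (Theta0 / m) * Dm + (a + 1) * α * Dm := by
      have := mul_le_mul_of_nonneg_right hM2 hDm0
      nlinarith [this]
    nlinarith [c1, c2, c3]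
  have hdiv : M ≤ (qform a m α ξ u + α * (Dm + Dp)) / (Dm + Dp) :=
    (le_div_iff₀ hDpos).mpr hkey
  have h2' : (qform a m α ξ u + α * (Dm + Dp)) / (Dm + Dp)
      = qform a m α ξ u / (Dm + Dp) + α := by
    field_simp
  rw [h2'] at hdiv
  rw [hsplit]
  linarith [hdiv]

/-- Lower bound (3.8) of the paper: for all `α > 0`,
`inf_ξ μ₁(a,m,α;ξ) + α ≥ min(Θ₀, Θ₀/m + (a+1)α)`. -/
theorem stmt_5 (a m α : ℝ) (ha : 0 < a) (hm : 0 < m) (hα : 0 < α) :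
    min Theta0 (Theta0 / m + (a + 1) * α) ≤ (⨅ ξ : ℝ, mu1 a m α ξ) + α := by
  rw [← sub_le_iff_le_add]
  refine le_ciInf fun ξ => ?_
  unfold mu1
  refine le_csInf (mu1_set_nonempty a m α ξ) ?_
  rintro r ⟨u, hu, hne, rfl⟩
  exact qform_lower a m α ξ hm hα u hu hne
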